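/- Let Y ∈ ℝ^{D×N} with 1 ≤ K ≤ D, and let p be a probability mass function on {1,…,K} with p(b) > 0 for every b. If (X*, Γ*) ∈ ℝ^{K×N} × ℝ^{D×K} is a global minimizer of the nested dropout cost C(X,Γ) = Σ_{b=1}^{K} p(b)·‖Y − Γ^{(b)} X^{(b)}‖_F², then for every b ∈ {1,…,K}, (X*, Γ*) is a global minimizer of the b-truncation cost C^{(b)}(X,Γ) = ‖Y − Γ^{(b)} X^{(b)}‖_F² over all X ∈ ℝ^{K×N}, Γ ∈ ℝ^{D×K}. -/

import Mathlib

open Matrix BigOperators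

/-- The `b`-truncation cost `C⁽ᵇ⁾(X,Γ) = ‖Y − Γ⁽ᵇ⁾ X⁽ᵇ⁾‖_F²`, where `Γ⁽ᵇ⁾ X⁽ᵇ⁾`
uses only the first `b` columns of `Γ` and first `b` rows of `X`. -/
noncomputable def truncCost {D N K : ℕ} (Y : Matrix (Fin D) (Fin N) ℝ)
    (X : Matrix (Fin K) (Fin N) ℝ) (G : Matrix (Fin D) (Fin K) ℝ) (b : ℕ) : ℝ :=
  ∑ i, ∑ j, (Y i j - ∑ k : Fin K, if (k : ℕ) < b then G i k * X k j else 0) ^ 2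

/-- The nested dropout cost: mixture of the `b`-truncation costs, `b = 1, …, K`,
with mixing weights `p`. Here `b : Fin K` represents the truncation index `b+1`. -/
noncomputable def ndCost {D N K : ℕ} (Y : Matrix (Fin D) (Fin N) ℝ) (p : Fin K → ℝ)
    (X : Matrix (Fin K) (Fin N) ℝ) (G : Matrix (Fin D) (Fin K) ℝ) : ℝ :=
  ∑ b : Fin K, p b * truncCost Y X G ((b : ℕ) + 1)

open Finset in

lemma sum_ite_lt {K b : ℕ} (hb : b ≤ K) (f : Fin K → ℝ) :
    (∑ k : Fin K, if (k : ℕ) < b then f k else 0) = ∑ k : Fin b, f (Fin.castLE hb k) := by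
  rw [← Finset.sum_filter]
  refine Finset.sum_bij' (fun k hk => (⟨(k : ℕ), (Finset.mem_filter.mp hk).2⟩ : Fin b))
    (fun k _ => Fin.castLE hb k) ?_ ?_ ?_ ?_ ?_ <;> simp [Fin.castLE, Fin.lt_iff_val_lt_val]

lemma rearrange {D : ℕ} (μ t : Fin D → ℝ) (hμa : Antitone μ) (hμ0 : ∀ i, 0 ≤ μ i)
    (ht0 : ∀ i, 0 ≤ t i) (ht1 : ∀ i, t i ≤ 1) (b : ℕ) (htb : ∑ i, t i ≤ (b : ℝ)) :
    ∑ i, μ i * t i ≤ ∑ i : Fin D, if (i : ℕ) < b then μ i else 0 := by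
  rcases le_or_gt D b with hDb | hbD
  · have : ∀ i : Fin D, (if (i : ℕ) < b then μ i else 0) = μ i := by
      intro i; rw [if_pos (lt_of_lt_of_le i.2 hDb)]
    rw [Finset.sum_congr rfl (fun i _ => this i)]
    exact Finset.sum_le_sum fun i _ => mul_le_of_le_one_right (hμ0 i) (ht1 i)
  · set c := μ ⟨b, hbD⟩ with hc
    have key : ∀ i : Fin D, μ i * t i - (if (i : ℕ) < b then μ i else 0)
        ≤ c * (t i - if (i : ℕ) < b then 1 else 0) := by
      intro i
      by_cases h : (i : ℕ) < b
      · simp only [if_pos h]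
        have h1 : c ≤ μ i := hμa (by exact Fin.le_def.mpr (le_of_lt h))
        nlinarith [ht1 i, ht0 i]
      · simp only [if_neg h]
        have h1 : μ i ≤ c := hμa (by exact Fin.le_def.mpr (le_of_not_gt h))
        nlinarith [ht0 i]
    have hcnt : (∑ i : Fin D, if (i : ℕ) < b then (1:ℝ) else 0) = b := by
      rw [sum_ite_lt (le_of_lt hbD)]; simp
    have h2 : ∑ i, (μ i * t i - if (i : ℕ) < b then μ i else 0)
        ≤ ∑ i, c * (t i - if (i : ℕ) < b then 1 else 0) := Finset.sum_le_sum fun i _ => key i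
    have h3 : ∑ i, c * (t i - if (i : ℕ) < b then (1:ℝ) else 0) = c * (∑ i, t i - b) := by
      rw [← Finset.mul_sum, Finset.sum_sub_distrib, hcnt]
    have h4 : c * (∑ i, t i - (b:ℝ)) ≤ 0 :=
      mul_nonpos_of_nonneg_of_nonpos (hμ0 _) (by linarith)
    rw [Finset.sum_sub_distrib] at h2
    linarith

local notation "⟪" x ", " y "⟫" => @inner ℝ _ _ x y

lemma expansion {D r : ℕ} {e : Fin r → EuclideanSpace ℝ (Fin D)} (he : Orthonormal ℝ e)
    (y : EuclideanSpace ℝ (Fin D)) (c : Fin r → ℝ) :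
    ‖y - ∑ k, c k • e k‖^2
      = ‖y‖^2 - (∑ k, ⟪e k, y⟫^2) + ∑ k, (c k - ⟪e k, y⟫)^2 := by
  have h1 : ⟪y, ∑ k, c k • e k⟫ = ∑ k, c k * ⟪e k, y⟫ := by
    rw [inner_sum]
    exact Finset.sum_congr rfl fun k _ => by rw [real_inner_smul_right, real_inner_comm]
  have h2 : ‖∑ k, c k • e k‖^2 = ∑ k, (c k)^2 := by
    rw [← real_inner_self_eq_norm_sq]
    simpa [sq] using he.inner_sum c c Finset.univ
  have h3 : ∑ k, (c k - ⟪e k, y⟫)^2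
      = (∑ k, (c k)^2) - 2 * ∑ k, c k * ⟪e k, y⟫ + ∑ k, ⟪e k, y⟫^2 := by
    rw [Finset.mul_sum, ← Finset.sum_sub_distrib, ← Finset.sum_add_distrib]
    exact Finset.sum_congr rfl fun k _ => by ring
  rw [norm_sub_sq_real, h1, h2, h3]; ring

lemma qsum_bound {D N r : ℕ} (y : Fin N → EuclideanSpace ℝ (Fin D))
    (U : OrthonormalBasis (Fin D) ℝ (EuclideanSpace ℝ (Fin D))) (μ : Fin D → ℝ)
    (hμa : Antitone μ)
    (hdiag : ∀ i i', (∑ j, ⟪y j, U i⟫ * ⟪y j, U i'⟫) = if i = i' then μ i else 0)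
    {e : Fin r → EuclideanSpace ℝ (Fin D)} (he : Orthonormal ℝ e)
    (b : ℕ) (hrb : r ≤ b) :
    (∑ k, ∑ j, ⟪y j, e k⟫^2) ≤ ∑ i : Fin D, if (i : ℕ) < b then μ i else 0 := by
  have hμ0 : ∀ i, 0 ≤ μ i := by
    intro i
    have h := hdiag i i
    rw [if_pos rfl] at h
    rw [← h]
    exact Finset.sum_nonneg fun j _ => mul_self_nonneg _
  have hek : ∀ (k : Fin r) (j : Fin N),
      ⟪y j, e k⟫ = ∑ i, ⟪U i, e k⟫ * ⟪y j, U i⟫ := by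
    intro k j
    conv_lhs => rw [← U.sum_repr' (e k)]
    rw [inner_sum]
    exact Finset.sum_congr rfl fun i _ => by rw [real_inner_smul_right]
  have step1 : ∀ k : Fin r, (∑ j, ⟪y j, e k⟫^2) = ∑ i, μ i * ⟪U i, e k⟫^2 := by
    intro k
    calc (∑ j, ⟪y j, e k⟫^2)
        = ∑ j, ∑ i, ∑ i', (⟪U i, e k⟫ * ⟪U i', e k⟫) * (⟪y j, U i⟫ * ⟪y j, U i'⟫) := by
          refine Finset.sum_congr rfl fun j _ => ?_
          rw [hek k j, sq, Finset.sum_mul_sum]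
          exact Finset.sum_congr rfl fun i _ => Finset.sum_congr rfl fun i' _ => by ring
      _ = ∑ i, ∑ i', (⟪U i, e k⟫ * ⟪U i', e k⟫) * ∑ j, ⟪y j, U i⟫ * ⟪y j, U i'⟫ := by
          rw [Finset.sum_comm]
          refine Finset.sum_congr rfl fun i _ => ?_
          rw [Finset.sum_comm]
          exact Finset.sum_congr rfl fun i' _ => (Finset.mul_sum _ _ _).symm
      _ = ∑ i, μ i * ⟪U i, e k⟫^2 := by
          refine Finset.sum_congr rfl fun i _ => ?_
          simp only [hdiag, mul_ite, mul_zero]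
          rw [Finset.sum_ite_eq Finset.univ i]
          simp [sq]; ring
  set t : Fin D → ℝ := fun i => ∑ k, ⟪U i, e k⟫^2 with ht
  have htot : (∑ k, ∑ j, ⟪y j, e k⟫^2) = ∑ i, μ i * t i := by
    simp only [step1, ht]
    rw [Finset.sum_comm]
    exact Finset.sum_congr rfl fun i _ => by rw [Finset.mul_sum]
  rw [htot]
  refine rearrange μ t hμa hμ0 (fun i => Finset.sum_nonneg fun k _ => sq_nonneg _) ?_ b ?_
  · intro i
    have hb := he.sum_inner_products_le (U i) (s := Finset.univ)
    have hU1 : ‖U i‖ = 1 := U.orthonormal.1 i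
    calc t i = ∑ k, ‖⟪e k, U i⟫‖^2 := by
          refine Finset.sum_congr rfl fun k _ => ?_
          rw [real_inner_comm, Real.norm_eq_abs, sq_abs]
      _ ≤ ‖U i‖^2 := hb
      _ = 1 := by rw [hU1]; norm_num
  · have hpar : ∀ x : EuclideanSpace ℝ (Fin D), (∑ i, ⟪U i, x⟫^2) = ‖x‖^2 := by
      intro x
      have := U.sum_inner_mul_inner x x
      rw [← real_inner_self_eq_norm_sq, ← this]
      exact Finset.sum_congr rfl fun i _ => by rw [sq, real_inner_comm]
    have : (∑ i, t i) = ∑ k : Fin r, ‖e k‖^2 := by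
      rw [Finset.sum_comm]
      exact Finset.sum_congr rfl fun k _ => hpar (e k)
    rw [this]
    have : ∀ k : Fin r, ‖e k‖^2 = 1 := fun k => by rw [he.1 k]; norm_num
    simp only [this, Finset.sum_const, Finset.card_univ, Fintype.card_fin, nsmul_eq_mul, mul_one]
    exact_mod_cast Nat.cast_le.mpr hrb

noncomputable def ycol {D N : ℕ} (Y : Matrix (Fin D) (Fin N) ℝ) (j : Fin N) :
    EuclideanSpace ℝ (Fin D) := WithLp.toLp 2 (fun a => Y a j)

@[simp] lemma ycol_apply {D N : ℕ} (Y : Matrix (Fin D) (Fin N) ℝ) (j : Fin N) (a : Fin D) :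
    ycol Y j a = Y a j := rfl

lemma spectral {D N : ℕ} (Y : Matrix (Fin D) (Fin N) ℝ) :
    ∃ (U : OrthonormalBasis (Fin D) ℝ (EuclideanSpace ℝ (Fin D))) (μ : Fin D → ℝ),
      Antitone μ ∧ ∀ i i', (∑ j, ⟪ycol Y j, U i⟫
        * ⟪ycol Y j, U i'⟫) = if i = i' then μ i else 0 := by
  have hS : (Y * Yᴴ).IsHermitian := isHermitian_mul_conjTranspose_self Y
  set σ : Equiv.Perm (Fin D) := Tuple.sort (fun i => -(hS.eigenvalues i)) with hσ
  refine ⟨hS.eigenvectorBasis.reindex σ.symm, fun i => hS.eigenvalues (σ i), ?_, ?_⟩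
  · intro a b hab
    have := Tuple.monotone_sort (fun i => -(hS.eigenvalues i)) hab
    simp only [Function.comp_apply, neg_le_neg_iff] at this
    exact this
  · intro i i'
    have hU : ∀ m, (hS.eigenvectorBasis.reindex σ.symm) m = hS.eigenvectorBasis (σ m) := by
      intro m; rw [OrthonormalBasis.reindex_apply, Equiv.symm_symm]
    have hinner : ∀ v w : EuclideanSpace ℝ (Fin D),
        (∑ j, ⟪ycol Y j, v⟫
          * ⟪ycol Y j, w⟫)
        = ∑ a, v a * ((Y * Yᴴ) *ᵥ w) a := by
      intro v w
      have lhs_eq : ∀ j : Fin N, ⟪ycol Y j, v⟫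
          * ⟪ycol Y j, w⟫
          = ∑ a, ∑ a', (Y a j * v a) * (Y a' j * w a') := by
        intro j
        rw [PiLp.inner_apply, PiLp.inner_apply, Finset.sum_mul_sum]
        simp [conj_trivial]
        refine Finset.sum_congr rfl fun a _ => Finset.sum_congr rfl fun a' _ => by ring
      have rhs_eq : ∀ a, v a * ((Y * Yᴴ) *ᵥ w) a
          = ∑ a', ∑ j, (Y a j * v a) * (Y a' j * w a') := by
        intro a
        rw [Matrix.mulVec, dotProduct, Finset.mul_sum]
        refine Finset.sum_congr rfl fun a' _ => ?_
        rw [Matrix.mul_apply, Finset.sum_mul, Finset.mul_sum]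
        refine Finset.sum_congr rfl fun j _ => ?_
        simp [Matrix.conjTranspose_apply]
        ring
      simp only [lhs_eq, rhs_eq]
      rw [Finset.sum_comm]
      exact Finset.sum_congr rfl fun a _ => Finset.sum_comm
    rw [hinner, hU, hU]
    have heig := hS.mulVec_eigenvectorBasis (σ i')
    have heig' : ∀ a, ((Y * Yᴴ) *ᵥ ⇑(hS.eigenvectorBasis (σ i'))) a
        = hS.eigenvalues (σ i') * hS.eigenvectorBasis (σ i') a := by
      intro a
      have h := congrFun heig a
      simpa using h
    have horth := orthonormal_iff_ite.mp hS.eigenvectorBasis.orthonormal (σ i) (σ i')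
    have : (∑ a, (hS.eigenvectorBasis (σ i)) a * ((Y * Yᴴ) *ᵥ ⇑(hS.eigenvectorBasis (σ i'))) a)
        = hS.eigenvalues (σ i') * ⟪hS.eigenvectorBasis (σ i), hS.eigenvectorBasis (σ i')⟫ := by
      rw [PiLp.inner_apply, Finset.mul_sum]
      refine Finset.sum_congr rfl fun a _ => ?_
      rw [heig' a]
      simp [conj_trivial]
      ring
    have h2 : hS.eigenvalues (σ i') * ⟪hS.eigenvectorBasis (σ i), hS.eigenvectorBasis (σ i')⟫
        = if i = i' then hS.eigenvalues (σ i) else 0 := by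
      rw [horth]
      by_cases h : i = i'
      · subst h; simp
      · have h' : σ i ≠ σ i' := fun hc => h (σ.injective hc)
        simp [h, h']
    exact this.trans h2

noncomputable def gcol {D K : ℕ} (G : Matrix (Fin D) (Fin K) ℝ) (k : Fin K) :
    EuclideanSpace ℝ (Fin D) := WithLp.toLp 2 (fun a => G a k)

lemma norm_sq_eq {D : ℕ} (v : EuclideanSpace ℝ (Fin D)) : ‖v‖^2 = ∑ i, (v i)^2 := by
  rw [← real_inner_self_eq_norm_sq, PiLp.inner_apply]
  exact Finset.sum_congr rfl fun i _ => by simp [conj_trivial, sq]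

lemma truncCost_eq_norm {D N K b : ℕ} (Y : Matrix (Fin D) (Fin N) ℝ)
    (X : Matrix (Fin K) (Fin N) ℝ) (G : Matrix (Fin D) (Fin K) ℝ) (hb : b ≤ K) :
    truncCost Y X G b = ∑ j, ‖ycol Y j
      - ∑ k : Fin b, X (Fin.castLE hb k) j • gcol G (Fin.castLE hb k)‖^2 := by
  rw [truncCost, Finset.sum_comm]
  refine Finset.sum_congr rfl fun j _ => ?_
  rw [norm_sq_eq]
  refine (Finset.sum_congr rfl fun i _ => ?_).symm
  congr 1
  have : (ycol Y j - ∑ k : Fin b, X (Fin.castLE hb k) j • gcol G (Fin.castLE hb k)) i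
      = Y i j - ∑ k : Fin b, G i (Fin.castLE hb k) * X (Fin.castLE hb k) j := by
    simp only [PiLp.sub_apply, ycol_apply]
    congr 1
    rw [WithLp.ofLp_sum, Finset.sum_apply]
    exact Finset.sum_congr rfl fun k _ => by simp [gcol, PiLp.smul_apply, mul_comm]
  rw [this, sum_ite_lt hb (fun k => G i k * X k j)]

lemma truncCost_lower {D N K : ℕ} (Y : Matrix (Fin D) (Fin N) ℝ)
    (U : OrthonormalBasis (Fin D) ℝ (EuclideanSpace ℝ (Fin D))) (μ : Fin D → ℝ)
    (hμa : Antitone μ)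
    (hdiag : ∀ i i', (∑ j, ⟪ycol Y j, U i⟫ * ⟪ycol Y j, U i'⟫) = if i = i' then μ i else 0)
    {b : ℕ} (hb : b ≤ K) (X : Matrix (Fin K) (Fin N) ℝ) (G : Matrix (Fin D) (Fin K) ℝ) :
    (∑ j, ‖ycol Y j‖^2) - (∑ i : Fin D, if (i : ℕ) < b then μ i else 0)
      ≤ truncCost Y X G b := by
  rw [truncCost_eq_norm Y X G hb]
  set g : Fin b → EuclideanSpace ℝ (Fin D) := fun k => gcol G (Fin.castLE hb k) with hg
  set V : Submodule ℝ (EuclideanSpace ℝ (Fin D)) := Submodule.span ℝ (Set.range g) with hV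
  have hrV : Module.finrank ℝ V ≤ b := by
    have := finrank_range_le_card (R := ℝ) g
    simpa [Set.finrank, Fintype.card_fin] using this
  set β := stdOrthonormalBasis ℝ V with hβ
  set e : Fin (Module.finrank ℝ V) → EuclideanSpace ℝ (Fin D) := fun k => (β k : _) with he'
  have he : Orthonormal ℝ e := by
    rw [orthonormal_iff_ite]
    intro k k'
    have := orthonormal_iff_ite.mp β.orthonormal k k'
    rwa [Submodule.coe_inner] at this
  have hspan : V ≤ Submodule.span ℝ (Set.range e) := by
    intro x hx
    have hxV : (⟨x, hx⟩ : V) ∈ (⊤ : Submodule ℝ V) := Submodule.mem_top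
    rw [← β.toBasis.span_eq] at hxV
    have : x ∈ Submodule.map V.subtype (Submodule.span ℝ (Set.range β.toBasis)) :=
      ⟨⟨x, hx⟩, hxV, rfl⟩
    rw [Submodule.map_span] at this
    convert this using 2
    ext z
    simp [he', Set.range_comp]
  have key : ∀ j, ‖ycol Y j‖^2 - ∑ k, ⟪e k, ycol Y j⟫^2
      ≤ ‖ycol Y j - ∑ k : Fin b, X (Fin.castLE hb k) j • g k‖^2 := by
    intro j
    have hw : (∑ k : Fin b, X (Fin.castLE hb k) j • g k) ∈ Submodule.span ℝ (Set.range e) := by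
      apply hspan
      exact Submodule.sum_mem _ fun k _ =>
        Submodule.smul_mem _ _ (Submodule.subset_span ⟨k, rfl⟩)
    obtain ⟨c, hc⟩ := (Submodule.mem_span_range_iff_exists_fun ℝ).mp hw
    rw [← hc, expansion he]
    have : (0:ℝ) ≤ ∑ k, (c k - ⟪e k, ycol Y j⟫)^2 :=
      Finset.sum_nonneg fun k _ => sq_nonneg _
    linarith
  have hq : (∑ k, ∑ j, ⟪ycol Y j, e k⟫^2) ≤ ∑ i : Fin D, if (i : ℕ) < b then μ i else 0 :=
    qsum_bound (ycol Y) U μ hμa hdiag he b hrV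
  have hsum : ∑ j, (‖ycol Y j‖^2 - ∑ k, ⟪e k, ycol Y j⟫^2)
      ≤ ∑ j, ‖ycol Y j - ∑ k : Fin b, X (Fin.castLE hb k) j • g k‖^2 :=
    Finset.sum_le_sum fun j _ => key j
  rw [Finset.sum_sub_distrib] at hsum
  have hswap : (∑ j, ∑ k, ⟪e k, ycol Y j⟫^2) = ∑ k, ∑ j, ⟪ycol Y j, e k⟫^2 := by
    rw [Finset.sum_comm]
    exact Finset.sum_congr rfl fun k _ => Finset.sum_congr rfl fun j _ => by
      rw [real_inner_comm]
  rw [hswap] at hsum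
  linarith

lemma truncCost_opt {D N K : ℕ} (hKD : K ≤ D) (Y : Matrix (Fin D) (Fin N) ℝ)
    (U : OrthonormalBasis (Fin D) ℝ (EuclideanSpace ℝ (Fin D))) (μ : Fin D → ℝ)
    (hdiag : ∀ i i', (∑ j, ⟪ycol Y j, U i⟫ * ⟪ycol Y j, U i'⟫) = if i = i' then μ i else 0)
    {b : ℕ} (hb : b ≤ K) :
    truncCost Y (fun k j => ⟪(U (Fin.castLE hKD k) : EuclideanSpace ℝ (Fin D)), ycol Y j⟫)
      (fun i k => U (Fin.castLE hKD k) i) b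
      = (∑ j, ‖ycol Y j‖^2) - (∑ i : Fin D, if (i : ℕ) < b then μ i else 0) := by
  refine (truncCost_eq_norm _ _ _ hb).trans ?_
  set e : Fin b → EuclideanSpace ℝ (Fin D) :=
    fun k => U (Fin.castLE (hb.trans hKD) k) with he'
  have he : Orthonormal ℝ e :=
    U.orthonormal.comp _ (Fin.castLE_injective _)
  have hterm : ∀ j, ‖ycol Y j - ∑ k : Fin b,
      (fun k j => ⟪(U (Fin.castLE hKD k) : EuclideanSpace ℝ (Fin D)), ycol Y j⟫)
        (Fin.castLE hb k) j •
      gcol (fun i k => U (Fin.castLE hKD k) i) (Fin.castLE hb k)‖^2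
      = ‖ycol Y j‖^2 - ∑ k, ⟪e k, ycol Y j⟫^2 := by
    intro j
    have hgc : ∀ k : Fin b,
        gcol (fun i k => U (Fin.castLE hKD k) i) (Fin.castLE hb k) = e k := fun k => rfl
    have hXc : ∀ k : Fin b,
        (fun k j => ⟪(U (Fin.castLE hKD k) : EuclideanSpace ℝ (Fin D)), ycol Y j⟫)
          (Fin.castLE hb k) j = ⟪e k, ycol Y j⟫ := fun k => rfl
    simp only [hgc, hXc]
    rw [expansion he]
    simp
  rw [Finset.sum_congr rfl fun j _ => hterm j, Finset.sum_sub_distrib]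
  congr 1
  have hk : ∀ k : Fin b, (∑ j, ⟪e k, ycol Y j⟫^2) = μ (Fin.castLE (hb.trans hKD) k) := by
    intro k
    have := hdiag (Fin.castLE (hb.trans hKD) k) (Fin.castLE (hb.trans hKD) k)
    rw [if_pos rfl] at this
    rw [← this]
    exact Finset.sum_congr rfl fun j _ => by rw [sq, real_inner_comm]
  rw [Finset.sum_comm, Finset.sum_congr rfl fun k _ => hk k,
    ← sum_ite_lt (hb.trans hKD) μ]

lemma exists_simultaneous {D N K : ℕ} (hKD : K ≤ D) (Y : Matrix (Fin D) (Fin N) ℝ) :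
    ∃ (Xh : Matrix (Fin K) (Fin N) ℝ) (Gh : Matrix (Fin D) (Fin K) ℝ),
      ∀ b : ℕ, b ≤ K → ∀ (X : Matrix (Fin K) (Fin N) ℝ) (G : Matrix (Fin D) (Fin K) ℝ),
        truncCost Y Xh Gh b ≤ truncCost Y X G b := by
  obtain ⟨U, μ, hμa, hdiag⟩ := spectral Y
  refine ⟨fun k j => ⟪(U (Fin.castLE hKD k) : EuclideanSpace ℝ (Fin D)), ycol Y j⟫,
    fun i k => U (Fin.castLE hKD k) i, fun b hb X G => ?_⟩
  rw [truncCost_opt hKD Y U μ hdiag hb]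
  exact truncCost_lower Y U μ hμa hdiag hb X G

/-- Every global minimizer of the nested dropout cost is, for every `b ∈ {1,…,K}`,
a global minimizer of the `b`-truncation cost. -/
theorem nd_minimizer_minimizes_every_truncation
    {D N K : ℕ} (hK : 1 ≤ K) (hKD : K ≤ D)
    (Y : Matrix (Fin D) (Fin N) ℝ) (p : Fin K → ℝ)
    (hp : ∀ b, 0 < p b) (hsum : ∑ b, p b = 1)
    (Xs : Matrix (Fin K) (Fin N) ℝ) (Gs : Matrix (Fin D) (Fin K) ℝ)
    (hmin : ∀ (X : Matrix (Fin K) (Fin N) ℝ) (G : Matrix (Fin D) (Fin K) ℝ),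
      ndCost Y p Xs Gs ≤ ndCost Y p X G) :
    ∀ (b : Fin K) (X : Matrix (Fin K) (Fin N) ℝ) (G : Matrix (Fin D) (Fin K) ℝ),
      truncCost Y Xs Gs ((b : ℕ) + 1) ≤ truncCost Y X G ((b : ℕ) + 1) := by
  intro b X G
  obtain ⟨Xh, Gh, hsim⟩ := exists_simultaneous hKD Y
  have hXG := hsim ((b : ℕ) + 1) b.isLt X G
  by_contra hcon
  push_neg at hcon
  have hlt : truncCost Y Xh Gh ((b : ℕ) + 1) < truncCost Y Xs Gs ((b : ℕ) + 1) :=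
    lt_of_le_of_lt hXG hcon
  have hnd : ndCost Y p Xh Gh < ndCost Y p Xs Gs := by
    unfold ndCost
    refine Finset.sum_lt_sum (fun c _ => mul_le_mul_of_nonneg_left (hsim _ c.isLt _ _) (hp c).le)
      ⟨b, Finset.mem_univ b, mul_lt_mul_of_pos_left hlt (hp b)⟩
  exact absurd (hmin Xh Gh) (not_le.mpr hnd)
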